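/- Let R be an associative unital algebra over ℚ and let a, b ∈ R satisfy a·b − b·a = b. Work in the ring R[X, X⁻¹][[y]] of formal power series in y over the Laurent polynomials in a central variable X over R. Set ℓ := log(1 − yX⁻¹) = −Σ_{k≥1} y^k X^{−k}/k, and for P ∈ R[X,X⁻¹][[y]] with zero constant term in y set exp(P) := Σ_{n≥0} P^n/n!. Then exp((a − X·b)·ℓ) = exp(y·b) · exp(a·ℓ). In the paper's notation this reads (1 − y₁/x)^{L(0) − x·L(−1)} = e^{y₁·L(−1)} · (1 − y₁/x)^{L(0)} for any operators L(0) = a and L(−1) = b satisfying [L(0), L(−1)] = L(−1). -/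

import Mathlib

/-- The formal exponential `exp(P) = Σ_{n≥0} P^n/n!` of a power series `P` (intended for `P`
with zero constant term, in which case the coefficient of `y^d` only involves `P^n` for
`n ≤ d`, so the truncated sum below agrees with the full exponential series). -/
noncomputable def formalExp {A : Type*} [Ring A] [Algebra ℚ A] (P : PowerSeries A) :
    PowerSeries A :=
  PowerSeries.mk fun d =>
    ∑ n ∈ Finset.range (d + 1), (n.factorial : ℚ)⁻¹ • (PowerSeries.coeff (R := A) d) (P ^ n)

/-- The element `X` of `R[X, X⁻¹][[y]]`. -/
noncomputable def Xvar (R : Type*) [Ring R] : PowerSeries (LaurentPolynomial R) :=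
  PowerSeries.C (R := LaurentPolynomial R) (LaurentPolynomial.T 1)

/-- The embedding of `R` into `R[X, X⁻¹][[y]]`. -/
noncomputable def embR {R : Type*} [Ring R] (r : R) : PowerSeries (LaurentPolynomial R) :=
  PowerSeries.C (R := LaurentPolynomial R) (LaurentPolynomial.C r)

/-- `ℓ = log(1 − y X⁻¹) = −Σ_{k≥1} y^k X^{−k}/k` in `R[X, X⁻¹][[y]]`. -/
noncomputable def ellSeries (R : Type*) [Ring R] [Algebra ℚ R] :
    PowerSeries (LaurentPolynomial R) :=
  PowerSeries.mk fun k =>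
    if k = 0 then 0 else (-((k : ℚ)⁻¹)) • LaurentPolynomial.T (-(k : ℤ))

set_option linter.unusedSectionVars false

namespace Stmt18Aux
open PowerSeries Finset

variable {A : Type*} [Ring A] [Algebra ℚ A]

/-- Formal derivative of a power series (noncommutative-friendly). -/
noncomputable def D (F : PowerSeries A) : PowerSeries A :=
  PowerSeries.mk fun d => (d + 1 : ℕ) • PowerSeries.coeff (d + 1) F

lemma coeff_D (F : PowerSeries A) (d : ℕ) :
    coeff d (D F) = (d + 1 : ℕ) • coeff (d + 1) F := coeff_mk _ _

lemma D_C (r : A) : D (C r) = 0 := by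
  ext d; simp [coeff_D, coeff_C]

lemma D_X : D (X : PowerSeries A) = 1 := by
  ext d
  simp only [coeff_D, coeff_X, coeff_one]
  rcases d with _ | d <;> simp

lemma D_mul (F G : PowerSeries A) : D (F * G) = D F * G + F * D G := by
  ext d
  rw [coeff_D, map_add, coeff_mul, coeff_mul, coeff_mul,
    Finset.Nat.sum_antidiagonal_eq_sum_range_succ_mk,
    Finset.Nat.sum_antidiagonal_eq_sum_range_succ_mk,
    Finset.Nat.sum_antidiagonal_eq_sum_range_succ_mk,
    Finset.smul_sum]
  have key : ∀ k ∈ Finset.range (d + 1 + 1),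
      (d + 1) • (coeff k F * coeff (d + 1 - k) G)
        = k • (coeff k F * coeff (d + 1 - k) G)
          + (d + 1 - k) • (coeff k F * coeff (d + 1 - k) G) := by
    intro k hk
    rw [← add_nsmul]
    congr 1
    simp only [mem_range] at hk
    omega
  rw [Finset.sum_congr rfl key, Finset.sum_add_distrib]
  congr 1
  · rw [Finset.sum_range_succ' (fun k => k • (coeff k F * coeff (d + 1 - k) G)) (d + 1)]
    simp only [zero_smul, add_zero]
    apply Finset.sum_congr rfl
    intro k hk
    simp only [mem_range] at hk
    have h1 : d + 1 - (k + 1) = d - k := by omega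
    rw [h1, coeff_D, smul_mul_assoc]
  · rw [Finset.sum_range_succ]
    simp only [Nat.sub_self, zero_smul, add_zero]
    apply Finset.sum_congr rfl
    intro k hk
    simp only [mem_range] at hk
    rw [coeff_D, mul_smul_comm]
    have h1 : d + 1 - k = (d - k) + 1 := by omega
    rw [h1]

lemma D_pow (P : PowerSeries A) (hc : P * D P = D P * P) (n : ℕ) :
    D (P ^ (n + 1)) = (n + 1) • (D P * P ^ n) := by
  induction n with
  | zero => simp [pow_one, one_smul]
  | succ n ih =>
    rw [pow_succ', D_mul, ih, mul_smul_comm, ← mul_assoc, hc, mul_assoc, ← pow_succ',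
      succ_nsmul]
    rw [add_nsmul, add_nsmul, one_nsmul]
    abel

end Stmt18Aux

namespace Stmt18Aux
open PowerSeries Finset

variable {A : Type*} [Ring A] [Algebra ℚ A]

lemma coeff_pow_eq_zero {P : PowerSeries A} (h0 : constantCoeff P = 0) :
    ∀ {n j : ℕ}, j < n → coeff j (P ^ n) = 0 := by
  intro n
  induction n with
  | zero => intro j hj; omega
  | succ n ih =>
    intro j hj
    rw [pow_succ', coeff_mul]
    apply Finset.sum_eq_zero
    intro p hp
    rw [Finset.HasAntidiagonal.mem_antidiagonal] at hp
    rcases Nat.eq_zero_or_pos p.1 with h1 | h1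
    · rw [h1, coeff_zero_eq_constantCoeff, h0, zero_mul]
    · rw [ih (by omega), mul_zero]

lemma coeff_formalExp_ext {P : PowerSeries A} (h0 : constantCoeff P = 0) (j N : ℕ)
    (hN : j < N) :
    coeff j (formalExp P) = ∑ n ∈ Finset.range N, (n.factorial : ℚ)⁻¹ • coeff j (P ^ n) := by
  rw [formalExp, coeff_mk]
  apply Finset.sum_subset (Finset.range_subset_range.2 (by omega))
  intro n hn hnj
  rw [Finset.mem_range] at hnj
  rw [coeff_pow_eq_zero h0 (by omega), smul_zero]

lemma constantCoeff_formalExp (P : PowerSeries A) :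
    constantCoeff (formalExp P) = 1 := by
  rw [← coeff_zero_eq_constantCoeff, formalExp, coeff_mk]
  simp

lemma coeff_mul_formalExp (Q P : PowerSeries A) (h0 : constantCoeff P = 0) (d : ℕ) :
    coeff d (Q * formalExp P)
      = ∑ n ∈ Finset.range (d + 1), (n.factorial : ℚ)⁻¹ • coeff d (Q * P ^ n) := by
  rw [coeff_mul]
  have key : ∀ p ∈ Finset.HasAntidiagonal.antidiagonal d, coeff p.1 Q * coeff p.2 (formalExp P)
      = ∑ n ∈ Finset.range (d + 1),
          (n.factorial : ℚ)⁻¹ • (coeff p.1 Q * coeff p.2 (P ^ n)) := by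
    intro p hp
    rw [Finset.HasAntidiagonal.mem_antidiagonal] at hp
    rw [coeff_formalExp_ext h0 p.2 (d + 1) (by omega), Finset.mul_sum]
    apply Finset.sum_congr rfl
    intro n _
    rw [mul_smul_comm]
  rw [Finset.sum_congr rfl key, Finset.sum_comm]
  apply Finset.sum_congr rfl
  intro n _
  rw [coeff_mul, Finset.smul_sum]

lemma D_formalExp {P : PowerSeries A} (h0 : constantCoeff P = 0)
    (hc : P * D P = D P * P) :
    D (formalExp P) = D P * formalExp P := by
  ext d
  rw [coeff_D, coeff_mul_formalExp _ _ h0,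
    coeff_formalExp_ext h0 (d + 1) (d + 2) (by omega),
    Finset.sum_range_succ' (fun n => (n.factorial : ℚ)⁻¹ • coeff (d + 1) (P ^ n)) (d + 1)]
  have h00 : ((Nat.factorial 0 : ℕ) : ℚ)⁻¹ • coeff (d + 1) (P ^ 0) = 0 := by
    simp [coeff_one]
  rw [h00, add_zero, Finset.smul_sum]
  apply Finset.sum_congr rfl
  intro n _
  have hpow := congrArg (coeff d) (D_pow P hc n)
  rw [coeff_D, map_nsmul] at hpow
  -- hpow : (d+1) • coeff (d+1) (P^(n+1)) = (n+1) • coeff d (D P * P^n)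
  rw [smul_comm ((d : ℕ) + 1) ((↑(n + 1).factorial : ℚ)⁻¹), hpow]
  rw [← Nat.cast_smul_eq_nsmul ℚ (n + 1), smul_smul]
  congr 1
  rw [Nat.factorial_succ]
  push_cast
  rw [mul_inv]
  field_simp

end Stmt18Aux

namespace Stmt18Aux
open PowerSeries Finset

variable {A : Type*} [Ring A] [Algebra ℚ A]

lemma ode_unique {M F G : PowerSeries A} (hF : D F = M * F) (hG : D G = M * G)
    (h0 : constantCoeff F = constantCoeff G) : F = G := by
  ext d
  induction d using Nat.strong_induction_on with
  | _ d ih =>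
    match d with
    | 0 => simpa [coeff_zero_eq_constantCoeff] using h0
    | d + 1 =>
      have hF' := congrArg (coeff d) hF
      have hG' := congrArg (coeff d) hG
      rw [coeff_D] at hF' hG'
      have key : (d + 1 : ℕ) • coeff (d + 1) F = (d + 1 : ℕ) • coeff (d + 1) G := by
        rw [hF', hG', coeff_mul, coeff_mul]
        apply Finset.sum_congr rfl
        intro p hp
        rw [Finset.HasAntidiagonal.mem_antidiagonal] at hp
        rw [ih p.2 (by omega)]
      have h1 : ((d + 1 : ℕ) : ℚ) ≠ 0 := by exact_mod_cast Nat.succ_ne_zero d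
      rw [← Nat.cast_smul_eq_nsmul ℚ, ← Nat.cast_smul_eq_nsmul ℚ] at key
      exact smul_right_injective _ h1 key

lemma mul_comm_of_coeff {P Q : PowerSeries A}
    (h : ∀ i j, Commute (coeff i P) (coeff j Q)) : P * Q = Q * P := by
  ext d
  rw [coeff_mul, coeff_mul, Finset.Nat.sum_antidiagonal_eq_sum_range_succ_mk,
    Finset.Nat.sum_antidiagonal_eq_sum_range_succ_mk,
    ← Finset.sum_range_reflect (fun k => coeff (k, d - k).1 Q * coeff (k, d - k).2 P) (d + 1)]
  apply Finset.sum_congr rfl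
  intro k hk
  rw [Finset.mem_range] at hk
  have h1 : d + 1 - 1 - k = d - k := by omega
  have h2 : d - (d - k) = k := by omega
  simp only [h1, h2]
  exact (h k (d - k)).eq

lemma pow_mul_of_comm {a b : A} (h : a * b - b * a = b) (d : ℕ) :
    b ^ d * a = a * b ^ d - d • b ^ d := by
  induction d with
  | zero => simp
  | succ d ih =>
    have hba : b * a = a * b - b := by rw [sub_eq_iff_eq_add.mp h, add_sub_cancel_left]
    calc b ^ (d + 1) * a = b ^ d * (b * a) := by rw [pow_succ, mul_assoc]
      _ = b ^ d * (a * b) - b ^ (d + 1) := by rw [hba, mul_sub, pow_succ]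
      _ = (b ^ d * a) * b - b ^ (d + 1) := by rw [mul_assoc]
      _ = (a * b ^ d - d • b ^ d) * b - b ^ (d + 1) := by rw [ih]
      _ = a * b ^ (d + 1) - (d + 1) • b ^ (d + 1) := by
          rw [sub_mul, smul_mul_assoc, mul_assoc, ← pow_succ, succ_nsmul]
          abel

lemma coeff_formalExp_X_mul_C (c : A) (d : ℕ) :
    coeff d (formalExp (X * C c)) = ((d.factorial : ℚ))⁻¹ • c ^ d := by
  have hcom : Commute (X : PowerSeries A) (C c) := (commute_X _).symm
  have hpow : ∀ n : ℕ, (X * C c) ^ n = C (c ^ n) * X ^ n := by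
    intro n
    rw [hcom.mul_pow, ← map_pow, ((commute_X (C (c ^ n))).pow_right n).symm.eq]
  rw [formalExp, coeff_mk]
  have key : ∀ n ∈ Finset.range (d + 1), (n.factorial : ℚ)⁻¹ • coeff d ((X * C c) ^ n)
      = if n = d then (d.factorial : ℚ)⁻¹ • c ^ d else 0 := by
    intro n hn
    rw [hpow, coeff_mul_X_pow', coeff_C]
    rcases eq_or_ne n d with rfl | hnd
    · simp
    · rw [if_neg hnd]
      rw [Finset.mem_range] at hn
      have hd : ¬ (d - n = 0) := by omega
      rw [if_pos (by omega), if_neg hd, smul_zero]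
  rw [Finset.sum_congr rfl key, Finset.sum_ite_eq' (Finset.range (d + 1)) d]
  rw [if_pos (Finset.self_mem_range_succ d)]

lemma exp_swap {a b : A} (h : a * b - b * a = b) :
    formalExp (X * C b) * C a = (C a - X * C b) * formalExp (X * C b) := by
  ext d
  rw [coeff_mul_C, sub_mul, map_sub, coeff_C_mul, mul_assoc]
  rcases d with _ | e
  · rw [coeff_formalExp_X_mul_C]
    simp [coeff_zero_eq_constantCoeff, map_mul]
  · rw [coeff_succ_X_mul, coeff_C_mul, coeff_formalExp_X_mul_C, coeff_formalExp_X_mul_C,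
      smul_mul_assoc, pow_mul_of_comm h (e + 1), smul_sub]
    congr 1
    · rw [mul_smul_comm]
    · rw [smul_comm, mul_smul_comm, ← pow_succ',
        ← Nat.cast_smul_eq_nsmul ℚ (e + 1) (((e + 1).factorial : ℚ)⁻¹ • b ^ (e + 1)), smul_smul]
      congr 1
      rw [Nat.factorial_succ]
      push_cast
      field_simp

end Stmt18Aux

namespace Stmt18Aux
open PowerSeries

variable (R : Type*) [Ring R] [Algebra ℚ R]

/-- The derivative of `ellSeries`: `-Σ_d y^d T^{-(d+1)}`. -/
noncomputable def ellD : PowerSeries (LaurentPolynomial R) :=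
  PowerSeries.mk fun d => -(LaurentPolynomial.T (-((d : ℤ) + 1)))

lemma D_ellSeries : D (ellSeries R) = ellD R := by
  ext d
  rw [coeff_D, ellSeries, ellD, coeff_mk, coeff_mk, if_neg (Nat.succ_ne_zero d)]
  rw [← Nat.cast_smul_eq_nsmul ℚ (d + 1), smul_smul]
  have h1 : ((d + 1 : ℕ) : ℚ) * (-(((d + 1 : ℕ) : ℚ))⁻¹) = -1 := by
    have : ((d + 1 : ℕ) : ℚ) ≠ 0 := by exact_mod_cast Nat.succ_ne_zero d
    field_simp
  push_cast
  push_cast at h1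
  rw [h1, neg_one_smul]

lemma constantCoeff_ellSeries : constantCoeff (ellSeries R) = 0 := by
  rw [← coeff_zero_eq_constantCoeff, ellSeries, coeff_mk, if_pos rfl]

lemma ell_comm (g : PowerSeries (LaurentPolynomial R)) :
    ellSeries R * g = g * ellSeries R := by
  apply mul_comm_of_coeff
  intro i j
  rw [ellSeries, coeff_mk]
  split
  · exact Commute.zero_left _
  · exact (LaurentPolynomial.commute_T _ _).smul_left _

lemma ellD_comm (g : PowerSeries (LaurentPolynomial R)) :
    ellD R * g = g * ellD R := by
  apply mul_comm_of_coeff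
  intro i j
  rw [ellD, coeff_mk]
  exact (LaurentPolynomial.commute_T _ _).neg_left

lemma X_sub_Xvar_mul_ellD : (PowerSeries.X - Xvar R) * ellD R = 1 := by
  apply PowerSeries.ext
  intro d
  rw [sub_mul, map_sub, coeff_one]
  have hXv : coeff d (Xvar R * ellD R)
      = -(LaurentPolynomial.T (-(d : ℤ))) := by
    rw [Xvar, coeff_C_mul, ellD, coeff_mk, mul_neg, ← LaurentPolynomial.T_add]
    norm_num
  rcases d with _ | e
  · rw [hXv]
    have : coeff 0 (PowerSeries.X * ellD R) = 0 := by
      rw [coeff_zero_eq_constantCoeff, map_mul, constantCoeff_X, zero_mul]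
    rw [this, if_pos rfl, zero_sub, neg_neg]
    norm_num
  · rw [hXv, coeff_succ_X_mul, ellD, coeff_mk, if_neg (Nat.succ_ne_zero e)]
    push_cast
    ring_nf
    exact sub_self _

end Stmt18Aux

namespace Stmt18Aux
open PowerSeries

lemma central_mul_comm {A : Type*} [Ring A] [Algebra ℚ A] {z w : PowerSeries A}
    (p : PowerSeries A) (hz : ∀ g, z * g = g * z) (hw : ∀ g, w * g = g * w) :
    (p * z) * (p * w) = (p * w) * (p * z) := by
  have h1 : (p * z) * (p * w) = p * (p * (z * w)) := by
    rw [mul_assoc, hz (p * w), mul_assoc, ← hz w, ← mul_assoc, ← mul_assoc, mul_assoc p p]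
  have h2 : (p * w) * (p * z) = p * (p * (z * w)) := by
    rw [mul_assoc, hw (p * z), mul_assoc, ← mul_assoc, ← mul_assoc, mul_assoc p p]
  rw [h1, h2]

end Stmt18Aux


/-- Lemma 6.4: if `a·b − b·a = b` in a `ℚ`-algebra `R`, then in `R[X, X⁻¹][[y]]`,
`exp((a − X·b)·ℓ) = exp(y·b) · exp(a·ℓ)`, i.e.
`(1 − y/X)^{a − X·b} = e^{y·b} (1 − y/X)^{a}`. -/
theorem stmt18 {R : Type*} [Ring R] [Algebra ℚ R] (a b : R) (h : a * b - b * a = b) :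
    formalExp ((embR a - Xvar R * embR b) * ellSeries R)
      = formalExp (PowerSeries.X * embR b) * formalExp (embR a * ellSeries R) := by
  classical
  open Stmt18Aux PowerSeries in
  set A := LaurentPolynomial R with hA
  have hrel : LaurentPolynomial.C a * LaurentPolynomial.C b
      - LaurentPolynomial.C b * LaurentPolynomial.C a = LaurentPolynomial.C b := by
    rw [← map_mul, ← map_mul, ← map_sub, h]
  set Ca : PowerSeries A := embR a with hCa
  set Cb : PowerSeries A := embR b with hCb
  set Xv : PowerSeries A := Xvar R with hXv
  set ℓ : PowerSeries A := ellSeries R with hℓ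
  set ℓ' : PowerSeries A := ellD R with hℓ'
  -- basic facts
  have hCaC : Ca = C (LaurentPolynomial.C a) := rfl
  have hCbC : Cb = C (LaurentPolynomial.C b) := rfl
  have hXvC : Xv = C (LaurentPolynomial.T 1) := rfl
  have hα : Ca - Xv * Cb = C (LaurentPolynomial.C a - LaurentPolynomial.T 1 * LaurentPolynomial.C b) := by
    rw [hCaC, hCbC, hXvC, ← map_mul, ← map_sub]
  have hℓ0 : constantCoeff ℓ = 0 := constantCoeff_ellSeries R
  have hDℓ : D ℓ = ℓ' := D_ellSeries R
  have hℓc : ∀ g, ℓ * g = g * ℓ := ell_comm R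
  have hℓ'c : ∀ g, ℓ' * g = g * ℓ' := ellD_comm R
  -- LHS : F := formalExp ((Ca - Xv * Cb) * ℓ)
  have hP0 : ∀ (q : PowerSeries A), constantCoeff (q * ℓ) = 0 := by
    intro q; rw [map_mul, hℓ0, mul_zero]
  have hDP : ∀ (α : A), D (C α * ℓ) = C α * ℓ' := by
    intro α
    rw [D_mul, D_C, zero_mul, zero_add, hDℓ]
  have hPc : ∀ (α : A), (C α * ℓ) * D (C α * ℓ) = D (C α * ℓ) * (C α * ℓ) := by
    intro α
    rw [hDP]
    exact central_mul_comm _ hℓc hℓ'c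
  have hDF : ∀ (α : A), D (formalExp (C α * ℓ)) = (C α * ℓ') * formalExp (C α * ℓ) := by
    intro α
    rw [D_formalExp (hP0 _) (hPc _), hDP]
  -- G₁ := formalExp (X * Cb)
  have hG10 : constantCoeff (PowerSeries.X * Cb) = 0 := by
    rw [map_mul, constantCoeff_X, zero_mul]
  have hDG1P : D (PowerSeries.X * Cb) = Cb := by
    rw [D_mul, D_X, one_mul, hCbC, D_C, mul_zero, add_zero]
  have hG1c : (PowerSeries.X * Cb) * D (PowerSeries.X * Cb)
      = D (PowerSeries.X * Cb) * (PowerSeries.X * Cb) := by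
    rw [hDG1P, ← mul_assoc, (commute_X Cb).eq]
  have hDG1 : D (formalExp (PowerSeries.X * Cb)) = Cb * formalExp (PowerSeries.X * Cb) := by
    rw [D_formalExp hG10 hG1c, hDG1P]
  -- the swap: exp(yb) * Ca = (Ca - X Cb) * exp(yb)
  have hswap : formalExp (PowerSeries.X * Cb) * Ca
      = (Ca - PowerSeries.X * Cb) * formalExp (PowerSeries.X * Cb) := exp_swap hrel
  -- key unit identity
  have hunit : (PowerSeries.X - Xv) * ℓ' = 1 := X_sub_Xvar_mul_ellD R
  have hXCb : (PowerSeries.X - Xv) * Cb = Cb * (PowerSeries.X - Xv) := by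
    rw [sub_mul, mul_sub, (commute_X Cb).eq, hCbC, hXvC, ← map_mul, ← map_mul,
      LaurentPolynomial.T_mul]
  have hkey : (PowerSeries.X - Xv) * (Cb * ℓ') = Cb := by
    rw [← mul_assoc, hXCb, mul_assoc, hunit, mul_one]
  have hM : (Ca - Xv * Cb) * ℓ' = Cb + (Ca - PowerSeries.X * Cb) * ℓ' := by
    have h3 : Ca - Xv * Cb - (Ca - PowerSeries.X * Cb) = (PowerSeries.X - Xv) * Cb := by
      rw [sub_mul]; abel
    have h2 : (Ca - Xv * Cb) * ℓ' - (Ca - PowerSeries.X * Cb) * ℓ' = Cb := by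
      rw [← sub_mul, h3, mul_assoc, hkey]
    exact sub_eq_iff_eq_add.mp h2
  -- ODE for F and G, then uniqueness
  have hodeF : D (formalExp ((Ca - Xv * Cb) * ℓ))
      = (Cb + (Ca - PowerSeries.X * Cb) * ℓ') * formalExp ((Ca - Xv * Cb) * ℓ) := by
    rw [hα, hDF, ← hα, hM]
  have hstep : formalExp (PowerSeries.X * Cb) * ((Ca * ℓ') * formalExp (Ca * ℓ))
      = ((Ca - PowerSeries.X * Cb) * ℓ')
          * (formalExp (PowerSeries.X * Cb) * formalExp (Ca * ℓ)) := by
    have e1 : formalExp (PowerSeries.X * Cb) * ((Ca * ℓ') * formalExp (Ca * ℓ))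
        = ((formalExp (PowerSeries.X * Cb) * Ca) * ℓ') * formalExp (Ca * ℓ) := by
      simp only [mul_assoc]
    have e2 : ((Ca - PowerSeries.X * Cb) * ℓ')
          * (formalExp (PowerSeries.X * Cb) * formalExp (Ca * ℓ))
        = (((Ca - PowerSeries.X * Cb) * ℓ') * formalExp (PowerSeries.X * Cb))
            * formalExp (Ca * ℓ) := by
      simp only [mul_assoc]
    rw [e1, e2, hswap]
    refine congrArg (· * formalExp (Ca * ℓ)) ?_
    rw [mul_assoc, mul_assoc, hℓ'c (formalExp (PowerSeries.X * Cb))]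
  have hodeG : D (formalExp (PowerSeries.X * Cb) * formalExp (Ca * ℓ))
      = (Cb + (Ca - PowerSeries.X * Cb) * ℓ')
          * (formalExp (PowerSeries.X * Cb) * formalExp (Ca * ℓ)) := by
    rw [D_mul, hDG1, hCaC, hDF, ← hCaC, hstep, add_mul]
    simp only [mul_assoc]
  have hcc : constantCoeff (formalExp ((Ca - Xv * Cb) * ℓ))
      = constantCoeff (formalExp (PowerSeries.X * Cb) * formalExp (Ca * ℓ)) := by
    rw [map_mul, constantCoeff_formalExp, constantCoeff_formalExp,
      constantCoeff_formalExp, one_mul]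
  exact ode_unique hodeF hodeG hcc
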